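/- arXiv:1403.2975 — 7 statements merged into one kernel-verified Lean document; each statement's English description precedes it below -/
import Mathlib

section
/- Let A = [x₀, x₁] and B = [y₀, y₁] be closed real intervals with lengths δ = x₁ − x₀ and Δ = y₁ − y₀. If δΔ < 1, then there exists at most one α ∈ Z[√2] with α ∈ A and α• ∈ B. -/
lemma zsqrt2_zero (p q : ℤ) (h : (p : ℝ) + q * Real.sqrt 2 = 0) : p = 0 ∧ q = 0 := by
  by_cases hq : q = 0
  · subst hq
    simp at h
    exact ⟨by exact_mod_cast h, rfl⟩
  · exfalso
    have : Real.sqrt 2 = (-p : ℝ) / q := by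
      field_simp
      linarith
    have : Irrational (Real.sqrt 2) := irrational_sqrt_two
    rw [‹Real.sqrt 2 = _›] at this
    exact this ⟨(-p : ℚ) / q, by push_cast; ring⟩

/-- If the intervals A = [x₀,x₁], B = [y₀,y₁] satisfy (x₁−x₀)(y₁−y₀) < 1, then the
    one-dimensional grid problem has at most one solution α ∈ ℤ[√2]. -/
theorem grid_problem_at_most_one (x₀ x₁ y₀ y₁ : ℝ)
    (h : (x₁ - x₀) * (y₁ - y₀) < 1)
    (a b a' b' : ℤ)
    (h1 : (a : ℝ) + b * Real.sqrt 2 ∈ Set.Icc x₀ x₁)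
    (h2 : (a : ℝ) - b * Real.sqrt 2 ∈ Set.Icc y₀ y₁)
    (h3 : (a' : ℝ) + b' * Real.sqrt 2 ∈ Set.Icc x₀ x₁)
    (h4 : (a' : ℝ) - b' * Real.sqrt 2 ∈ Set.Icc y₀ y₁) :
    (a : ℝ) + b * Real.sqrt 2 = (a' : ℝ) + b' * Real.sqrt 2 := by
  obtain ⟨h1l, h1r⟩ := h1
  obtain ⟨h2l, h2r⟩ := h2
  obtain ⟨h3l, h3r⟩ := h3
  obtain ⟨h4l, h4r⟩ := h4
  set s := Real.sqrt 2 with hs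
  have hs2 : s ^ 2 = 2 := Real.sq_sqrt (by norm_num)
  set p : ℤ := a - a'
  set q : ℤ := b - b'
  have hd : ((p : ℝ) + q * s) * ((p : ℝ) - q * s) = ((p ^ 2 - 2 * q ^ 2 : ℤ) : ℝ) := by
    push_cast
    nlinarith [hs2]
  -- bounds on the two factors
  have hpc : (p : ℝ) = (a : ℝ) - a' := by simp [p]
  have hqc : (q : ℝ) = (b : ℝ) - b' := by simp [q]
  have hb1 : |((p : ℝ) + q * s)| ≤ x₁ - x₀ := by
    rw [abs_le]; constructor <;> rw [hpc, hqc] <;> nlinarith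
  have hb2 : |((p : ℝ) - q * s)| ≤ y₁ - y₀ := by
    rw [abs_le]; constructor <;> rw [hpc, hqc] <;> nlinarith
  have habs : |((p ^ 2 - 2 * q ^ 2 : ℤ) : ℝ)| < 1 := by
    rw [← hd, abs_mul]
    calc |((p : ℝ) + q * s)| * |((p : ℝ) - q * s)| ≤ (x₁ - x₀) * (y₁ - y₀) := by
          apply mul_le_mul hb1 hb2 (abs_nonneg _)
          exact le_trans (abs_nonneg _) hb1
      _ < 1 := h
  have hint : (p ^ 2 - 2 * q ^ 2 : ℤ) = 0 := by
    have := (abs_lt.mp habs)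
    have h1 : (p ^ 2 - 2 * q ^ 2 : ℤ) < 1 := by exact_mod_cast this.2
    have h2 : (-1 : ℤ) < p ^ 2 - 2 * q ^ 2 := by exact_mod_cast this.1
    omega
  have hprod : ((p : ℝ) + q * s) * ((p : ℝ) - q * s) = 0 := by
    rw [hd, hint]; norm_num
  have hpq : p = 0 ∧ q = 0 := by
    rcases mul_eq_zero.mp hprod with hz | hz
    · exact zsqrt2_zero p q hz
    · have := zsqrt2_zero p (-q) (by push_cast; linarith)
      exact ⟨this.1, by omega⟩
  have ha : a = a' := by have := hpq.1; omega
  have hb : b = b' := by have := hpq.2; omega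
  rw [ha, hb]
end

section
/- Let A = [x₀, x₁] and B = [y₀, y₁] be closed real intervals with lengths δ = x₁ − x₀ and Δ = y₁ − y₀. If δΔ ≥ (1 + √2)², then there exists at least one α ∈ Z[√2] with α ∈ A and α• ∈ B. -/
lemma grid_key (x₀ x₁ y₀ y₁ : ℝ) (h1 : 1 ≤ x₁ - x₀) (h2 : 1 ≤ y₁ - y₀)
    (h : (1 + Real.sqrt 2) ^ 2 ≤ (x₁ - x₀) * (y₁ - y₀)) :
    ∃ a b : ℤ, ((a : ℝ) + b * Real.sqrt 2 ∈ Set.Icc x₀ x₁) ∧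
      ((a : ℝ) - b * Real.sqrt 2 ∈ Set.Icc y₀ y₁) := by
  set s := Real.sqrt 2 with hs
  have hs2 : s ^ 2 = 2 := Real.sq_sqrt (by norm_num)
  have hs1 : 1 ≤ s := by
    rw [hs]; nlinarith [Real.sq_sqrt (show (0:ℝ) ≤ 2 by norm_num), Real.sqrt_nonneg 2]
  have hspos : 0 < s := by linarith
  have hsum : 2 + 2 * s ≤ (x₁ - x₀) + (y₁ - y₀) := by
    nlinarith [sq_nonneg ((x₁ - x₀) - (y₁ - y₀)), sq_nonneg ((x₁-x₀)+(y₁-y₀)+(2+2*s))]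
  set b : ℤ := ⌈(x₀ - y₁ + 1) / (2 * s)⌉ with hbdef
  have hb_lo : (x₀ - y₁ + 1) / (2 * s) ≤ (b : ℝ) := Int.le_ceil _
  have hb_hi : (b : ℝ) ≤ (x₀ - y₁ + 1) / (2 * s) + 1 :=
    le_of_lt (Int.ceil_lt_add_one _)
  have hb1 : x₀ - y₁ + 1 ≤ 2 * b * s := by
    have := (div_le_iff₀ (by positivity : (0:ℝ) < 2 * s)).mp hb_lo
    linarith
  have hb2 : 2 * b * s ≤ x₁ - y₀ - 1 := by
    have h' : (b:ℝ) * (2*s) ≤ ((x₀-y₁+1)/(2*s)+1) * (2*s) :=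
      mul_le_mul_of_nonneg_right hb_hi (by positivity)
    rw [add_mul, div_mul_cancel₀ _ (by positivity : (2*s : ℝ) ≠ 0), one_mul] at h'
    linarith
  set a : ℤ := ⌈max (x₀ - b * s) (y₀ + b * s)⌉ with hadef
  have ha_lo : max (x₀ - b * s) (y₀ + b * s) ≤ (a : ℝ) := Int.le_ceil _
  have ha_hi : (a : ℝ) ≤ max (x₀ - b * s) (y₀ + b * s) + 1 :=
    le_of_lt (Int.ceil_lt_add_one _)
  have hmax1 : x₀ - b * s ≤ (a : ℝ) := le_trans (le_max_left _ _) ha_lo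
  have hmax2 : y₀ + b * s ≤ (a : ℝ) := le_trans (le_max_right _ _) ha_lo
  have ha1 : (a : ℝ) ≤ x₁ - b * s := by
    have := max_le (show x₀ - b*s ≤ x₁ - b*s - 1 by linarith)
      (show y₀ + b*s ≤ x₁ - b*s - 1 by linarith)
    linarith
  have ha2 : (a : ℝ) ≤ y₁ + b * s := by
    have := max_le (show x₀ - b*s ≤ y₁ + b*s - 1 by linarith)
      (show y₀ + b*s ≤ y₁ + b*s - 1 by linarith)
    linarith
  exact ⟨a, b, ⟨by linarith, by linarith⟩, ⟨by linarith, by linarith⟩⟩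

lemma grid_gen : ∀ n : ℕ, ∀ x₀ x₁ y₀ y₁ : ℝ, y₀ ≤ y₁ → 1 ≤ x₁ - x₀ →
    x₁ - x₀ ≤ (3 + 2 * Real.sqrt 2) ^ (n + 1) →
    (1 + Real.sqrt 2) ^ 2 ≤ (x₁ - x₀) * (y₁ - y₀) →
    ∃ a b : ℤ, ((a : ℝ) + b * Real.sqrt 2 ∈ Set.Icc x₀ x₁) ∧
      ((a : ℝ) - b * Real.sqrt 2 ∈ Set.Icc y₀ y₁) := by
  have hs2 : Real.sqrt 2 ^ 2 = 2 := Real.sq_sqrt (by norm_num)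
  have hs1 : 1 ≤ Real.sqrt 2 := by nlinarith [Real.sqrt_nonneg 2]
  have hs32 : Real.sqrt 2 < 3/2 := by nlinarith [Real.sqrt_nonneg 2]
  set s := Real.sqrt 2 with hs
  intro n
  induction n with
  | zero =>
    intro x₀ x₁ y₀ y₁ hy h1 hup h
    apply grid_key _ _ _ _ h1 _ h
    have hup' : x₁ - x₀ ≤ 3 + 2*s := by rw [pow_one] at hup; linarith
    nlinarith
  | succ n ih =>
    intro x₀ x₁ y₀ y₁ hy h1 hup h
    set μ : ℝ := 3 + 2 * s with hμ
    have hμpos : (0:ℝ) < μ := by positivity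
    have hμ1 : 1 ≤ μ := by nlinarith
    by_cases hc : x₁ - x₀ ≤ μ ^ (n + 1)
    · exact ih x₀ x₁ y₀ y₁ hy h1 hc h
    · push_neg at hc
      have hμn1 : μ ≤ μ ^ (n+1) := le_self_pow₀ hμ1 (by omega)
      have hprod : (x₁/μ - x₀/μ) * (μ*y₁ - μ*y₀) = (x₁-x₀)*(y₁-y₀) := by
        field_simp
      obtain ⟨a, b, ⟨hA1, hA2⟩, ⟨hB1, hB2⟩⟩ :=
        ih (x₀ / μ) (x₁ / μ) (μ * y₀) (μ * y₁)
          (by nlinarith)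
          (by rw [div_sub_div_same, le_div_iff₀ hμpos]; nlinarith)
          (by rw [div_sub_div_same, div_le_iff₀ hμpos, ← pow_succ]; exact hup)
          (by rw [hprod]; exact h)
      have e1 : ((a:ℝ) + b*s) * μ = 3*a + 4*b + (2*a + 3*b)*s := by
        rw [hμ]; linear_combination (2*(b:ℝ)) * hs2
      have e2 : ((a:ℝ) - b*s) * (3 - 2*s) = 3*a + 4*b - (2*a + 3*b)*s := by
        linear_combination (2*(b:ℝ)) * hs2
      have h32 : 0 < 3 - 2*s := by linarith
      have hμinv : μ * (3 - 2*s) = 1 := by rw [hμ]; linear_combination (-4:ℝ) * hs2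
      have ey0 : μ * y₀ * (3 - 2*s) = y₀ := by linear_combination y₀ * hμinv
      have ey1 : μ * y₁ * (3 - 2*s) = y₁ := by linear_combination y₁ * hμinv
      refine ⟨3*a + 4*b, 2*a + 3*b, ⟨?_, ?_⟩, ⟨?_, ?_⟩⟩ <;> push_cast
      · have := (div_le_iff₀ hμpos).mp hA1
        linarith [e1 ▸ this]
      · have := (le_div_iff₀ hμpos).mp hA2
        linarith [e1 ▸ this]
      · have h' := mul_le_mul_of_nonneg_right hB1 (le_of_lt h32)
        rw [e2, ey0] at h'
        linarith
      · have h' := mul_le_mul_of_nonneg_right hB2 (le_of_lt h32)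
        rw [e2, ey1] at h'
        linarith

lemma grid_half (x₀ x₁ y₀ y₁ : ℝ)
    (hy : y₀ ≤ y₁) (h1 : 1 ≤ x₁ - x₀)
    (h : (1 + Real.sqrt 2) ^ 2 ≤ (x₁ - x₀) * (y₁ - y₀)) :
    ∃ a b : ℤ, ((a : ℝ) + b * Real.sqrt 2 ∈ Set.Icc x₀ x₁) ∧
      ((a : ℝ) - b * Real.sqrt 2 ∈ Set.Icc y₀ y₁) := by
  have hs1 : 1 ≤ Real.sqrt 2 := by
    nlinarith [Real.sq_sqrt (show (0:ℝ) ≤ 2 by norm_num), Real.sqrt_nonneg 2]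
  have hμ1 : (1:ℝ) < 3 + 2 * Real.sqrt 2 := by linarith
  obtain ⟨n, hn⟩ := pow_unbounded_of_one_lt (x₁ - x₀) hμ1
  exact grid_gen n x₀ x₁ y₀ y₁ hy h1
    (le_trans (le_of_lt hn) (pow_le_pow_right₀ (by linarith) (by omega))) h

/-- If the intervals A = [x₀,x₁], B = [y₀,y₁] satisfy (x₁−x₀)(y₁−y₀) ≥ (1+√2)²,
    then the one-dimensional grid problem has at least one solution α ∈ ℤ[√2]. -/
theorem grid_problem_at_least_one (x₀ x₁ y₀ y₁ : ℝ)
    (hx : x₀ ≤ x₁) (hy : y₀ ≤ y₁)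
    (h : (1 + Real.sqrt 2) ^ 2 ≤ (x₁ - x₀) * (y₁ - y₀)) :
    ∃ a b : ℤ, ((a : ℝ) + b * Real.sqrt 2 ∈ Set.Icc x₀ x₁) ∧
      ((a : ℝ) - b * Real.sqrt 2 ∈ Set.Icc y₀ y₁) := by
  have hs1 : 1 ≤ Real.sqrt 2 := by
    nlinarith [Real.sq_sqrt (show (0:ℝ) ≤ 2 by norm_num), Real.sqrt_nonneg 2]
  by_cases h1 : 1 ≤ x₁ - x₀
  · exact grid_half x₀ x₁ y₀ y₁ hy h1 h
  · push_neg at h1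
    have h2 : 1 ≤ y₁ - y₀ := by nlinarith
    obtain ⟨a, b, hA, hB⟩ := grid_half y₀ y₁ x₀ x₁ hx h2 (by nlinarith)
    refine ⟨a, -b, ?_, ?_⟩ <;> push_cast <;>
      [simpa [sub_eq_add_neg] using hB; simpa [sub_neg_eq_add] using hA]
end

section
/- A real linear operator G : ℝ² → ℝ², identified with a 2×2 real matrix, satisfies G(Z[ω]) ⊆ Z[ω] (where Z[ω] is viewed as a subset of ℝ² via the identification of ℂ with ℝ²) if and only if G has entries of the form G = [[a + a'/√2, b + b'/√2], [c + c'/√2, d + d'/√2]] with integers a, b, c, d, a', b', c', d' satisfying a + b + c + d ≡ 0 (mod 2) and a' ≡ b' ≡ c' ≡ d' (mod 2). -/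
/-- ℤ[ω], identified with a subset of ℝ² (as pairs of coordinates). -/
def gridPts : Set (Fin 2 → ℝ) :=
  {v | ∃ x₁ x₂ y₁ y₂ : ℤ, v 0 = x₁ + x₂ / Real.sqrt 2 ∧
        v 1 = y₁ + y₂ / Real.sqrt 2 ∧ x₂ % 2 = y₂ % 2}

/-- Uniqueness of the representation `p + q √2` with rational coefficients. -/
lemma sqrt2_uniq (p q p' q' : ℚ) (h : (p:ℝ) + q * Real.sqrt 2 = p' + q' * Real.sqrt 2) :
    p = p' ∧ q = q' := by
  have hir := irrational_sqrt_two
  by_cases hq : q = q'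
  · subst hq
    have : (p:ℝ) = p' := by linarith
    exact ⟨by exact_mod_cast this, rfl⟩
  · exfalso
    have hqq : ((q - q' : ℚ) : ℝ) ≠ 0 := by
      exact_mod_cast sub_ne_zero.mpr hq
    have : Real.sqrt 2 = (((p' - p) / (q - q') : ℚ) : ℝ) := by
      push_cast
      push_cast at hqq
      rw [eq_div_iff hqq]
      ring_nf
      ring_nf at h
      linarith
    exact hir ⟨_, this.symm⟩

/-- Extraction of the integer coefficients from `(A + B/√2)/√2 = u₁ + u₂/√2`. -/
lemma key (A B u₁ u₂ : ℤ)
    (h : ((A:ℝ) + (B:ℝ)/Real.sqrt 2)/Real.sqrt 2 = (u₁:ℝ) + (u₂:ℝ)/Real.sqrt 2) :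
    A = u₂ ∧ B = 2*u₁ := by
  have h0 : Real.sqrt 2 ≠ 0 := by positivity
  have hr : Real.sqrt 2 * Real.sqrt 2 = 2 := Real.mul_self_sqrt (by norm_num)
  field_simp at h
  have h' : (((2*A:ℤ):ℚ):ℝ) + (((B:ℤ):ℚ):ℝ)*Real.sqrt 2
      = (((2*u₂:ℤ):ℚ):ℝ) + (((2*u₁:ℤ):ℚ):ℝ)*Real.sqrt 2 := by
    push_cast; linear_combination (Real.sqrt 2) * h + ((u₁:ℝ)*Real.sqrt 2 - A + u₂) * hr
  obtain ⟨e1, e2⟩ := sqrt2_uniq _ _ _ _ h'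
  have e1' : (2*A : ℤ) = 2*u₂ := by exact_mod_cast e1
  have e2' : (B : ℤ) = 2*u₁ := by exact_mod_cast e2
  exact ⟨by omega, e2'⟩

/-- Characterization of grid operators: G maps ℤ[ω] into ℤ[ω] iff its entries have the
    stated form with the stated parity conditions. -/
theorem grid_operator_characterization (G : Matrix (Fin 2) (Fin 2) ℝ) :
    (∀ v ∈ gridPts, G.mulVec v ∈ gridPts) ↔
    (∃ a b c d a' b' c' d' : ℤ,
      G 0 0 = a + a' / Real.sqrt 2 ∧ G 0 1 = b + b' / Real.sqrt 2 ∧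
      G 1 0 = c + c' / Real.sqrt 2 ∧ G 1 1 = d + d' / Real.sqrt 2 ∧
      (a + b + c + d) % 2 = 0 ∧
      a' % 2 = b' % 2 ∧ b' % 2 = c' % 2 ∧ c' % 2 = d' % 2) := by
  have h0 : Real.sqrt 2 ≠ 0 := by positivity
  have hr : Real.sqrt 2 * Real.sqrt 2 = 2 := Real.mul_self_sqrt (by norm_num)
  have hr2 : (Real.sqrt 2)⁻¹ * (Real.sqrt 2)⁻¹ = 1/2 := by
    rw [← mul_inv, hr]; norm_num
  constructor
  · -- forward direction
    intro h
    obtain ⟨a, a', c, c', hGA, hGC, hac⟩ := h ![1, 0]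
      ⟨1, 0, 0, 0, by norm_num, by norm_num, rfl⟩
    obtain ⟨b, b', d, d', hGB, hGD, hbd⟩ := h ![0, 1]
      ⟨0, 0, 1, 0, by norm_num, by norm_num, rfl⟩
    obtain ⟨u₁, u₂, w₁, w₂, hu, hw, huw⟩ := h ![1/Real.sqrt 2, 1/Real.sqrt 2]
      ⟨0, 1, 0, 1, by norm_num, by norm_num, rfl⟩
    simp [Matrix.mulVec, dotProduct, Fin.sum_univ_two] at hGA hGC hGB hGD hu hw
    rw [hGA, hGB] at hu
    rw [hGC, hGD] at hw
    obtain ⟨e1, e2⟩ := key (a+b) (a'+b') u₁ u₂ (by push_cast; linear_combination hu)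
    obtain ⟨f1, f2⟩ := key (c+d) (c'+d') w₁ w₂ (by push_cast; linear_combination hw)
    exact ⟨a, b, c, d, a', b', c', d', hGA, hGB, hGC, hGD, by omega, by omega, by omega, by omega⟩
  · -- backward direction
    rintro ⟨a, b, c, d, a', b', c', d', hA, hB, hC, hD, hpar, hab, hbc, hcd⟩
    rintro v ⟨x₁, x₂, y₁, y₂, hv0, hv1, hxy⟩
    obtain ⟨s, hs⟩ : ∃ s, b' = a' + 2*s := ⟨(b'-a')/2, by omega⟩
    obtain ⟨s₂, hs₂⟩ : ∃ s, c' = a' + 2*s := ⟨(c'-a')/2, by omega⟩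
    obtain ⟨s₃, hs₃⟩ : ∃ s, d' = a' + 2*s := ⟨(d'-a')/2, by omega⟩
    obtain ⟨t, ht⟩ : ∃ t, y₂ = x₂ + 2*t := ⟨(y₂-x₂)/2, by omega⟩
    obtain ⟨n, hn⟩ : ∃ n, a+b+c+d = 2*n := ⟨(a+b+c+d)/2, by omega⟩
    obtain ⟨k, hk⟩ : ∃ k, a'*x₂ + b'*y₂ = 2*k :=
      ⟨a'*x₂ + a'*t + s*x₂ + 2*s*t, by rw [hs, ht]; ring⟩
    obtain ⟨m, hm⟩ : ∃ m, c'*x₂ + d'*y₂ = 2*m :=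
      ⟨a'*x₂ + s₂*x₂ + a'*t + s₃*x₂ + 2*s₃*t, by rw [hs₂, hs₃, ht]; ring⟩
    have hk' : (a':ℝ)*x₂ + (b':ℝ)*y₂ = 2*k := by exact_mod_cast hk
    have hm' : (c':ℝ)*x₂ + (d':ℝ)*y₂ = 2*m := by exact_mod_cast hm
    have hmv0 : (G.mulVec v) 0 = G 0 0 * v 0 + G 0 1 * v 1 := by
      simp [Matrix.mulVec, dotProduct, Fin.sum_univ_two]
    have hmv1 : (G.mulVec v) 1 = G 1 0 * v 0 + G 1 1 * v 1 := by
      simp [Matrix.mulVec, dotProduct, Fin.sum_univ_two]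
    refine ⟨a*x₁+b*y₁+k, a*x₂+b*y₂+a'*x₁+b'*y₁,
            c*x₁+d*y₁+m, c*x₂+d*y₂+c'*x₁+d'*y₁, ?_, ?_, ?_⟩
    · rw [hmv0, hA, hB, hv0, hv1]
      push_cast
      linear_combination ((Real.sqrt 2)⁻¹*(Real.sqrt 2)⁻¹) * hk' + (2*(k:ℝ)) * hr2
    · rw [hmv1, hC, hD, hv0, hv1]
      push_cast
      linear_combination ((Real.sqrt 2)⁻¹*(Real.sqrt 2)⁻¹) * hm' + (2*(m:ℝ)) * hr2
    · have : a*x₂+b*y₂+a'*x₁+b'*y₁ - (c*x₂+d*y₂+c'*x₁+d'*y₁)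
          = 2*((n-c-d)*x₂+(b-d)*t-s₂*x₁+(s-s₃)*y₁) := by
        rw [hs, hs₂, hs₃, ht]; linear_combination x₂*hn
      omega
end

section
/- Every element ξ ∈ Z[√2] with ξ ∼ ξ• (i.e., ξ and ξ• are associates) satisfies either ξ ∼ n or ξ ∼ n√2 for some integer n ∈ ℤ. -/
open Zsqrtd

/-- The fundamental unit `1 + √2` of `ℤ√2`, as a unit. -/
def Lam : (ℤ√2)ˣ where
  val := ⟨1, 1⟩
  inv := ⟨-1, 1⟩
  val_inv := by ext <;> simp
  inv_val := by ext <;> simp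

@[simp] lemma Lam_val : (Lam : ℤ√2) = ⟨1, 1⟩ := rfl
@[simp] lemma Lam_inv_val : ((Lam⁻¹ : (ℤ√2)ˣ) : ℤ√2) = ⟨-1, 1⟩ := rfl

lemma norm_unit (u : (ℤ√2)ˣ) : norm (u : ℤ√2) = 1 ∨ norm (u : ℤ√2) = -1 := by
  have h : IsUnit (norm (u : ℤ√2)) := by
    refine IsUnit.of_mul_eq_one (norm ((u⁻¹ : (ℤ√2)ˣ) : ℤ√2)) ?_
    rw [← norm_mul]
    simp
  exact Int.isUnit_iff.mp h

lemma classify_pos : ∀ n : ℕ, ∀ u : (ℤ√2)ˣ, (u : ℤ√2).im.natAbs = n →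
    0 ≤ (u : ℤ√2).re → 0 ≤ (u : ℤ√2).im →
    ∃ m : ℤ, (u : ℤ√2) = ((Lam ^ m : (ℤ√2)ˣ) : ℤ√2) := by
  intro n
  induction n using Nat.strong_induction_on with
  | _ n ih =>
    intro u hn hre him
    set a := (u : ℤ√2).re with ha
    set b := (u : ℤ√2).im with hb
    have hnorm : a * a - 2 * (b * b) = 1 ∨ a * a - 2 * (b * b) = -1 := by
      have := norm_unit u
      rwa [norm_def, show (2:ℤ) * b * b = 2 * (b*b) by ring] at this
    have hbd : 2 * (b * b) - 1 ≤ a * a ∧ a * a ≤ 2 * (b * b) + 1 := by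
      rcases hnorm with h1 | h1 <;> constructor <;> linarith
    by_cases hb0 : b = 0
    · -- base case
      have ha1 : a = 1 := by
        rcases hnorm with h1 | h1 <;> rw [hb0] at h1 <;> nlinarith
      refine ⟨0, ?_⟩
      simp only [zpow_zero, Units.val_one]
      ext <;> simp [← ha, ← hb, ha1, hb0]
    · -- descent
      have hb1 : 1 ≤ b := lt_of_le_of_ne him (Ne.symm hb0)
      have hab : b ≤ a := by nlinarith [hbd.1]
      have ha2b : a < 2 * b := by nlinarith [hbd.2]
      set u' := u * Lam⁻¹ with hu'
      have hre' : (u' : ℤ√2).re = 2 * b - a := by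
        show ((u : ℤ√2) * _).re = _
        rw [Lam_inv_val, Zsqrtd.re_mul]; show a * (-1) + 2 * b * 1 = _; ring
      have him' : (u' : ℤ√2).im = a - b := by
        show ((u : ℤ√2) * _).im = _
        rw [Lam_inv_val, Zsqrtd.im_mul]; show a * 1 + b * (-1) = _; ring
      have hlt : (u' : ℤ√2).im.natAbs < n := by
        rw [him']; omega
      obtain ⟨m, hm⟩ := ih _ hlt u' rfl (by rw [hre']; omega) (by rw [him']; omega)
      refine ⟨m + 1, ?_⟩
      calc (u : ℤ√2) = ((u' * Lam : (ℤ√2)ˣ) : ℤ√2) := by rw [hu']; congr 1; group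
        _ = (u' : ℤ√2) * (Lam : ℤ√2) := Units.val_mul _ _
        _ = ((Lam ^ m : (ℤ√2)ˣ) : ℤ√2) * (Lam : ℤ√2) := by rw [hm]
        _ = ((Lam ^ m * Lam : (ℤ√2)ˣ) : ℤ√2) := (Units.val_mul _ _).symm
        _ = ((Lam ^ (m + 1) : (ℤ√2)ˣ) : ℤ√2) := by rw [zpow_add_one]

def GoodU (u : (ℤ√2)ˣ) : Prop :=
  ∃ m : ℤ, (u : ℤ√2) = ((Lam ^ m : (ℤ√2)ˣ) : ℤ√2) ∨
    (u : ℤ√2) = -((Lam ^ m : (ℤ√2)ˣ) : ℤ√2)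

lemma goodU_neg {u : (ℤ√2)ˣ} (h : GoodU (-u)) : GoodU u := by
  obtain ⟨m, hm | hm⟩ := h
  · exact ⟨m, Or.inr (by rw [Units.val_neg] at hm; linear_combination -hm)⟩
  · exact ⟨m, Or.inl (by rw [Units.val_neg] at hm; linear_combination -hm)⟩

lemma goodU_inv {u : (ℤ√2)ˣ} (h : GoodU u⁻¹) : GoodU u := by
  obtain ⟨m, hm | hm⟩ := h
  · refine ⟨-m, Or.inl ?_⟩
    have h1 : u⁻¹ = Lam ^ m := Units.ext hm
    rw [show u = (u⁻¹)⁻¹ by simp, h1, ← zpow_neg]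
  · refine ⟨-m, Or.inr ?_⟩
    have h1 : u⁻¹ = -Lam ^ m := Units.ext (by rw [Units.val_neg]; exact hm)
    rw [show u = (u⁻¹)⁻¹ by simp, h1, inv_neg, Units.val_neg, ← zpow_neg]

lemma goodU_star {u : (ℤ√2)ˣ}
    (h : GoodU (Units.map (starRingEnd (ℤ√2)).toMonoidHom u)) : GoodU u := by
  have hval : ((Units.map (starRingEnd (ℤ√2)).toMonoidHom u : (ℤ√2)ˣ) : ℤ√2)
      = star (u : ℤ√2) := rfl
  have hstar : star (u : ℤ√2)
      = ((norm (u:ℤ√2) : ℤ) : ℤ√2) * ((u⁻¹ : (ℤ√2)ˣ) : ℤ√2) := by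
    have h1 : ((norm (u:ℤ√2) : ℤ) : ℤ√2) = (u : ℤ√2) * star (u : ℤ√2) :=
      norm_eq_mul_conj _
    calc star (u : ℤ√2)
        = ((u : ℤ√2) * star (u:ℤ√2)) * ((u⁻¹ : (ℤ√2)ˣ) : ℤ√2) := by
          rw [mul_comm ((u:ℤ√2)) (star (u:ℤ√2)), mul_assoc]; simp
      _ = _ := by rw [← h1]
  apply goodU_inv
  obtain ⟨m, hm⟩ := h
  rw [hval, hstar] at hm
  rcases norm_unit u with h1 | h1 <;> rw [h1] at hm <;>
    simp only [Int.cast_one, Int.cast_neg, one_mul, neg_mul, neg_neg] at hm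
  · exact ⟨m, hm⟩
  · rcases hm with hm | hm
    · exact ⟨m, Or.inr (by linear_combination -hm)⟩
    · exact ⟨m, Or.inl (by linear_combination -hm)⟩

/-- Every unit of `ℤ√2` is `± (1+√2)^m`. -/
lemma unit_classify (u : (ℤ√2)ˣ) : GoodU u := by
  set su := Units.map (starRingEnd (ℤ√2)).toMonoidHom u with hsu
  have hsu_re : (su : ℤ√2).re = (u : ℤ√2).re := rfl
  have hsu_im : (su : ℤ√2).im = -(u : ℤ√2).im := rfl
  rcases le_total 0 (u : ℤ√2).re with hre | hre
  · rcases le_total 0 (u : ℤ√2).im with him | him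
    · obtain ⟨m, hm⟩ := classify_pos _ u rfl hre him
      exact ⟨m, Or.inl hm⟩
    · apply goodU_star
      obtain ⟨m, hm⟩ := classify_pos _ su rfl (by rw [hsu_re]; exact hre)
        (by rw [hsu_im]; omega)
      exact ⟨m, Or.inl hm⟩
  · rcases le_total 0 (u : ℤ√2).im with him | him
    · apply goodU_star; apply goodU_neg
      obtain ⟨m, hm⟩ := classify_pos _ (-su) rfl
        (by rw [Units.val_neg, Zsqrtd.re_neg, hsu_re]; omega)
        (by rw [Units.val_neg, Zsqrtd.im_neg, hsu_im]; omega)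
      exact ⟨m, Or.inl hm⟩
    · apply goodU_neg
      obtain ⟨m, hm⟩ := classify_pos _ (-u) rfl
        (by rw [Units.val_neg, Zsqrtd.re_neg]; omega)
        (by rw [Units.val_neg, Zsqrtd.im_neg]; omega)
      exact ⟨m, Or.inl hm⟩

lemma two_nonsquare : ∀ z : ℤ, (2 : ℤ) ≠ z * z := by
  intro z hz
  have h1 : -1 ≤ z := by nlinarith
  have h2 : z ≤ 1 := by nlinarith
  interval_cases z <;> omega

lemma finish_self {ξ η : ℤ√2} (v : (ℤ√2)ˣ) (hη : η = (v : ℤ√2) * ξ)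
    (hs : star η = η) : ∃ n : ℤ, Associated ξ (n : ℤ√2) := by
  have him : η.im = 0 := by
    have := congrArg Zsqrtd.im hs
    rw [Zsqrtd.im_star] at this; omega
  refine ⟨η.re, ⟨v, ?_⟩⟩
  rw [mul_comm, ← hη]
  ext <;> simp [him]

lemma finish_sqrt {ξ η : ℤ√2} (v : (ℤ√2)ˣ) (hη : η = (v : ℤ√2) * ξ)
    (hs : star η = -η) : ∃ n : ℤ, Associated ξ ((n : ℤ√2) * Zsqrtd.sqrtd) := by
  have hre : η.re = 0 := by
    have := congrArg Zsqrtd.re hs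
    rw [Zsqrtd.re_star, Zsqrtd.re_neg] at this; omega
  refine ⟨η.im, ⟨v, ?_⟩⟩
  rw [mul_comm, ← hη]
  ext <;> simp [Zsqrtd.re_mul, Zsqrtd.im_mul, hre]

/-- If ξ ∈ ℤ[√2] is associate to its conjugate ξ•, then ξ ∼ n or ξ ∼ n√2 for some n ∈ ℤ. -/
theorem associated_conj_classification (ξ : ℤ√2) (h : Associated ξ (star ξ)) :
    (∃ n : ℤ, Associated ξ (n : ℤ√2)) ∨
    (∃ n : ℤ, Associated ξ ((n : ℤ√2) * Zsqrtd.sqrtd)) := by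
  rcases eq_or_ne ξ 0 with rfl | hxi
  · left; exact ⟨0, by rw [Int.cast_zero]⟩
  obtain ⟨u, hu⟩ := h
  -- the unit has norm 1
  have hNξ : norm ξ ≠ 0 := fun hh => hxi ((norm_eq_zero two_nonsquare ξ).mp hh)
  have hNu : norm (u : ℤ√2) = 1 := by
    have h1 : norm ξ * norm (u : ℤ√2) = norm ξ * 1 := by
      rw [mul_one, ← norm_mul, hu, norm_conj]
    exact mul_left_cancel₀ hNξ h1
  obtain ⟨m, hm⟩ := unit_classify u
  rcases Int.even_or_odd m with ⟨k, hk⟩ | ⟨k, hk⟩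
  · -- even case: u = ± v² with v = Λ^k
    set w : ℤ√2 := ((Lam ^ k : (ℤ√2)ˣ) : ℤ√2) with hw
    have hww : ((Lam ^ m : (ℤ√2)ˣ) : ℤ√2) = w * w := by
      rw [hk, zpow_add, Units.val_mul]
    rw [hww] at hm
    have hNw : norm w = 1 ∨ norm w = -1 := norm_unit _
    have hwsw : ∃ ε : ℤ√2, (ε = 1 ∨ ε = -1) ∧ w * star w = ε := by
      rcases hNw with h1 | h1
      · exact ⟨1, Or.inl rfl, by rw [← norm_eq_mul_conj, h1, Int.cast_one]⟩
      · exact ⟨-1, Or.inr rfl, by rw [← norm_eq_mul_conj, h1]; simp⟩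
    obtain ⟨ε, hε, hwε⟩ := hwsw
    set η : ℤ√2 := w * ξ with hη
    have hsη : star η = star w * star ξ := by rw [hη, star_mul, mul_comm]
    have key : ∃ σ : ℤ√2, (σ = 1 ∨ σ = -1) ∧ star η = σ * ε * η := by
      rcases hm with hm | hm
      · refine ⟨1, Or.inl rfl, ?_⟩
        rw [hsη, ← hu, hm, hη]
        linear_combination (ξ * w) * hwε
      · refine ⟨-1, Or.inr rfl, ?_⟩
        rw [hsη, ← hu, hm, hη]
        linear_combination (-ξ * w) * hwε
    obtain ⟨σ, hσ, hkey⟩ := key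
    rcases hσ with rfl | rfl <;> rcases hε with rfl | rfl
    · left; exact finish_self (Lam ^ k) hη (by rw [hkey]; ring)
    · right; exact finish_sqrt (Lam ^ k) hη (by rw [hkey]; ring)
    · right; exact finish_sqrt (Lam ^ k) hη (by rw [hkey]; ring)
    · left; exact finish_self (Lam ^ k) hη (by rw [hkey]; ring)
  · -- odd case: impossible since norm u = 1
    exfalso
    set w : ℤ√2 := ((Lam ^ k : (ℤ√2)ˣ) : ℤ√2) with hw
    have hww : ((Lam ^ m : (ℤ√2)ˣ) : ℤ√2) = w * w * (Lam : ℤ√2) := by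
      rw [hk, show 2 * k + 1 = k + k + 1 by ring, zpow_add, zpow_add, zpow_one,
        Units.val_mul, Units.val_mul]
    have hNΛ : norm ((Lam : (ℤ√2)ˣ) : ℤ√2) = -1 := by
      rw [Lam_val, norm_def]; ring
    have : norm (u : ℤ√2) = norm w * norm w * (-1) := by
      rcases hm with hm | hm
      · rw [hm, hww, norm_mul, norm_mul, hNΛ]
      · rw [hm, norm_neg, hww, norm_mul, norm_mul, hNΛ]
    rw [hNu] at this
    nlinarith [this]
end

section
/- A unit u of the ring Z[√2] is doubly positive (i.e., u ≥ 0 and u• ≥ 0 as real numbers) if and only if u is a square in Z[√2]. -/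
open Zsqrtd

noncomputable def phi2 : ℤ√2 →+* ℝ := Zsqrtd.toReal (by norm_num)

lemma phi2_apply (a : ℤ√2) : phi2 a = (a.re : ℝ) + a.im * Real.sqrt 2 := by
  simp [phi2, Zsqrtd.toReal_apply]

/-- the fundamental unit 1 + √2 as a unit of ℤ√2 -/
def lambda2 : (ℤ√2)ˣ :=
  ⟨⟨1, 1⟩, ⟨-1, 1⟩, by ext <;> simp [Zsqrtd.re_mul, Zsqrtd.im_mul],
    by ext <;> simp [Zsqrtd.re_mul, Zsqrtd.im_mul]⟩

/-- A unit u of ℤ[√2] is doubly positive (u ≥ 0 and u• ≥ 0 as real numbers) iff u is a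
    square in ℤ[√2]. -/
theorem unit_doubly_positive_iff_square (u : ℤ√2) (hu : IsUnit u) :
    ((0 ≤ (u.re : ℝ) + u.im * Real.sqrt 2 ∧ 0 ≤ (u.re : ℝ) - u.im * Real.sqrt 2) ↔
      ∃ v : ℤ√2, u = v * v) := by
  have h2 : (Real.sqrt 2) ^ 2 = 2 := Real.sq_sqrt (by norm_num)
  constructor
  · rintro ⟨h1, h2'⟩
    rw [← phi2_apply] at h1
    have hstar : phi2 (star u) = (u.re : ℝ) - u.im * Real.sqrt 2 := by
      rw [phi2_apply]; simp [Zsqrtd.re_star, Zsqrtd.im_star]; ring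
    rw [← hstar] at h2'
    -- the norm of u is ±1
    have hnu : IsUnit u.norm := (Zsqrtd.isUnit_iff_norm_isUnit u).mp hu
    have hprod : ((u.norm : ℤ) : ℝ) = phi2 u * phi2 (star u) := by
      rw [← map_mul, ← Zsqrtd.norm_eq_mul_conj, map_intCast]
    have hn1 : u.norm = 1 := by
      rcases Int.isUnit_iff.mp hnu with h | h
      · exact h
      · exfalso
        rw [h] at hprod
        push_cast at hprod
        nlinarith [mul_nonneg h1 h2']
    -- build a Pell solution
    set a : Pell.Solution₁ 2 := ⟨u, Zsqrtd.norm_eq_one_iff_mem_unitary.mp hn1⟩ with ha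
    have hau : (a : ℤ√2) = u := rfl
    -- the fundamental solution
    set f : Pell.Solution₁ 2 := Pell.Solution₁.mk 3 2 (by norm_num) with hfdef
    have hf : Pell.IsFundamental f := by
      refine ⟨by norm_num [hfdef, Pell.Solution₁.x_mk], by norm_num [hfdef, Pell.Solution₁.y_mk], ?_⟩
      intro b hb
      rw [hfdef, Pell.Solution₁.x_mk]
      by_contra hcon
      push_neg at hcon
      have hbx : b.x = 2 := by omega
      have hby := b.prop
      rw [hbx] at hby
      have : 2 * b.y ^ 2 = 3 := by linarith
      omega
    obtain ⟨n, hn⟩ := hf.eq_zpow_or_neg_zpow a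
    -- relate f to lambda2
    have hfl : Unitary.toUnits f = lambda2 ^ 2 := by
      refine Units.ext ?_
      show (f : ℤ√2) = ((lambda2 ^ 2 : (ℤ√2)ˣ) : ℤ√2)
      rw [hfdef, Pell.Solution₁.coe_mk, sq, Units.val_mul]
      ext <;> simp [lambda2, Zsqrtd.re_mul, Zsqrtd.im_mul]
    have key : (↑(f ^ n) : ℤ√2) = ↑(lambda2 ^ n) * ↑(lambda2 ^ n) := by
      have : Unitary.toUnits (f ^ n) = lambda2 ^ n * lambda2 ^ n := by
        rw [show Unitary.toUnits (f ^ n) = Unitary.toUnits f ^ n from map_zpow Unitary.toUnits f n, hfl, ← zpow_add lambda2 n n, ← zpow_natCast (lambda2) 2, ← zpow_mul]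
        ring_nf
      have hval := congrArg Units.val this
      rw [Units.val_mul] at hval
      exact hval
    -- positivity of powers of lambda2 under phi2
    have hpos : ∀ m : ℤ, 0 < phi2 ((lambda2 ^ m : (ℤ√2)ˣ) : ℤ√2) := by
      intro m
      have : phi2 ((lambda2 ^ m : (ℤ√2)ˣ) : ℤ√2)
          = ((Units.map (phi2 : ℤ√2 →+* ℝ).toMonoidHom lambda2 : ℝˣ) : ℝ) ^ m := by
        rw [← Units.val_zpow_eq_zpow_val, ← map_zpow]
        rfl
      rw [this]
      apply zpow_pos
      show (0 : ℝ) < phi2 (lambda2 : ℤ√2)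
      rw [phi2_apply]
      have := Real.sqrt_nonneg 2
      simp only [lambda2]
      norm_num
      linarith
    rcases hn with hn | hn
    · refine ⟨((lambda2 ^ n : (ℤ√2)ˣ) : ℤ√2), ?_⟩
      rw [← hau, hn, key]
    · exfalso
      have : (a : ℤ√2) = -(↑(f ^ n) : ℤ√2) := by
        rw [hn]; rfl
      rw [hau, key, ← sq] at this
      have hp := hpos n
      have : phi2 u = -(phi2 ((lambda2 ^ n : (ℤ√2)ˣ) : ℤ√2) ^ 2) := by
        rw [this, map_neg, map_pow]
      nlinarith [h1, hp]
  · rintro ⟨v, rfl⟩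
    have hre : (((v * v : ℤ√2)).re : ℝ) = (v.re : ℝ) * v.re + 2 * (v.im * v.im) := by
      rw [Zsqrtd.re_mul]; push_cast; ring
    have him : (((v * v : ℤ√2)).im : ℝ) = (v.re : ℝ) * v.im + v.im * v.re := by
      rw [Zsqrtd.im_mul]; push_cast; ring
    constructor
    · have key : (((v * v : ℤ√2)).re : ℝ) + ((v * v : ℤ√2)).im * Real.sqrt 2
          = ((v.re : ℝ) + v.im * Real.sqrt 2) ^ 2 := by
        rw [hre, him]; linear_combination (-(v.im : ℝ) ^ 2) * h2
      rw [key]; positivity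
    · have key : (((v * v : ℤ√2)).re : ℝ) - ((v * v : ℤ√2)).im * Real.sqrt 2
          = ((v.re : ℝ) - v.im * Real.sqrt 2) ^ 2 := by
        rw [hre, him]; linear_combination (-(v.im : ℝ) ^ 2) * h2
      rw [key]; positivity
end

section
/- If W is a unitary 2×2 complex matrix with det W = 1 and tr W ≥ 0 (the trace is real since det W = 1), then for every unit complex scalar λ, ‖I − W‖ ≤ ‖I − λW‖, where ‖·‖ denotes the operator norm. -/
open Complex

private lemma quad_spec (M : Matrix (Fin 2) (Fin 2) ℂ) (z : ℂ) :
    z ∈ spectrum ℂ M ↔ z ^ 2 - M.trace * z + M.det = 0 := by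
  rw [spectrum.mem_iff, Matrix.isUnit_iff_isUnit_det, isUnit_iff_ne_zero, not_not]
  constructor <;> intro h
  · rw [← h]
    simp [Matrix.det_fin_two, Matrix.trace_fin_two, Matrix.algebraMap_eq_diagonal,
      Matrix.sub_apply, Matrix.diagonal_apply]
    ring
  · rw [← h] at *
    simp [Matrix.det_fin_two, Matrix.trace_fin_two, Matrix.algebraMap_eq_diagonal,
      Matrix.sub_apply, Matrix.diagonal_apply]
    ring

private lemma scalar_ineq (l m : ℂ) (hl : ‖l‖ = 1) (hm : ‖m‖ = 1) (hre : 0 ≤ m.re) :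
    ‖1 - m‖ ≤ max ‖1 - l * m‖ ‖1 - l * (starRingEnd ℂ m)‖ := by
  have hl2 : l.re ^ 2 + l.im ^ 2 = 1 := by
    have : ‖l‖ ^ 2 = 1 := by rw [hl]; norm_num
    rw [Complex.sq_norm, Complex.normSq_apply] at this; nlinarith
  have hm2 : m.re ^ 2 + m.im ^ 2 = 1 := by
    have : ‖m‖ ^ 2 = 1 := by rw [hm]; norm_num
    rw [Complex.sq_norm, Complex.normSq_apply] at this; nlinarith
  have hp : l.re ≤ 1 := by nlinarith [sq_nonneg l.im]
  have e0 : ‖1 - m‖ ^ 2 = 2 - 2 * m.re := by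
    rw [Complex.sq_norm, Complex.normSq_apply]
    simp only [Complex.sub_re, Complex.sub_im, Complex.one_re, Complex.one_im]
    nlinarith
  have e1 : ‖1 - l * m‖ ^ 2 = 2 - 2 * (l.re * m.re - l.im * m.im) := by
    rw [Complex.sq_norm, Complex.normSq_apply]
    simp only [Complex.sub_re, Complex.sub_im, Complex.one_re, Complex.one_im,
      Complex.mul_re, Complex.mul_im]
    nlinarith
  have e2 : ‖1 - l * (starRingEnd ℂ m)‖ ^ 2 = 2 - 2 * (l.re * m.re + l.im * m.im) := by
    rw [Complex.sq_norm, Complex.normSq_apply]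
    simp only [Complex.sub_re, Complex.sub_im, Complex.one_re, Complex.one_im,
      Complex.mul_re, Complex.mul_im, Complex.conj_re, Complex.conj_im]
    nlinarith
  rcases le_total 0 (l.im * m.im) with h | h
  · refine le_max_of_le_left ?_
    nlinarith [norm_nonneg (1 - m), norm_nonneg (1 - l * m),
      mul_nonneg hre (sub_nonneg.mpr hp)]
  · refine le_max_of_le_right ?_
    nlinarith [norm_nonneg (1 - m), norm_nonneg (1 - l * (starRingEnd ℂ m)),
      mul_nonneg hre (sub_nonneg.mpr hp)]


private lemma rad_le_of_forall {A : Type*} [NormedRing A] [NormedAlgebra ℂ A]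
    {a : A} {r : ENNReal} (h : ∀ k ∈ spectrum ℂ a, (‖k‖₊ : ENNReal) ≤ r) :
    spectralRadius ℂ a ≤ r := by
  unfold spectralRadius
  exact iSup₂_le h

private lemma le_rad_of_mem {A : Type*} [NormedRing A] [NormedAlgebra ℂ A]
    {a : A} {k : ℂ} (hk : k ∈ spectrum ℂ a) : (‖k‖₊ : ENNReal) ≤ spectralRadius ℂ a := by
  unfold spectralRadius
  exact le_iSup₂ (f := fun (z : ℂ) (_ : z ∈ spectrum ℂ a) => (‖z‖₊ : ENNReal)) k hk

set_option maxHeartbeats 1000000 in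
/-- If W is a 2×2 unitary with det W = 1 and tr W ≥ 0 (the trace is real in this case),
    then ‖I − W‖ ≤ ‖I − λW‖ for every unit scalar λ, in the operator norm. -/
theorem norm_one_sub_le_of_unit_scalar (W : Matrix (Fin 2) (Fin 2) ℂ)
    (hW : W ∈ Matrix.unitaryGroup (Fin 2) ℂ)
    (hdet : W.det = 1) (htr : 0 ≤ (Matrix.trace W).re)
    (lam : ℂ) (hlam : ‖lam‖ = 1) :
    ‖Matrix.toEuclideanCLM (n := Fin 2) (𝕜 := ℂ) (1 - W)‖ ≤
      ‖Matrix.toEuclideanCLM (n := Fin 2) (𝕜 := ℂ) (1 - lam • W)‖ := by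
  classical
  set Φ := Matrix.toEuclideanCLM (n := Fin 2) (𝕜 := ℂ) with hPhi
  clear_value Φ
  set t : ℂ := W.trace with ht
  clear_value t
  obtain ⟨s, hs⟩ := IsAlgClosed.exists_pow_nat_eq (k := ℂ) (t ^ 2 - 4) (n := 2) (by norm_num)
  set mu : ℂ := (t + s) / 2 with hmu
  set nu : ℂ := t - mu with hnu
  clear_value nu mu
  have hroot : mu ^ 2 - t * mu + 1 = 0 := by
    rw [hmu]; linear_combination hs / 4
  have hsum : mu + nu = t := by rw [hnu]; ring
  have hprod : mu * nu = 1 := by rw [hnu]; linear_combination -hroot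
  have hmus : mu ∈ spectrum ℂ W := by
    rw [quad_spec, hdet, ← ht]; exact hroot
  have hnus : nu ∈ spectrum ℂ W := by
    rw [quad_spec, hdet, ← ht, hnu]; linear_combination hroot
  -- the unitary element of the C*-algebra of operators
  obtain ⟨hW1, hW2⟩ := Unitary.mem_iff.mp hW
  set u : EuclideanSpace ℂ (Fin 2) →L[ℂ] EuclideanSpace ℂ (Fin 2) := Φ W with hu
  clear_value u
  have hu1 : star u * u = 1 := by rw [hu, ← map_star, ← map_mul, hW1, map_one]
  have hu2 : u * star u = 1 := by rw [hu, ← map_star, ← map_mul, hW2, map_one]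
  have hu_mem : u ∈ unitary _ := Unitary.mem_iff.mpr ⟨hu1, hu2⟩
  have circle : ∀ z ∈ spectrum ℂ W, ‖z‖ = 1 := by
    intro z hz
    have hz' : z ∈ spectrum ℂ u := by
      rw [hu, hPhi, AlgEquiv.spectrum_eq]; exact hz
    exact mem_sphere_zero_iff_norm.mp (spectrum.subset_circle_of_unitary hu_mem hz')
  have hmabs : ‖mu‖ = 1 := circle mu hmus
  have hnabs : ‖nu‖ = 1 := circle nu hnus
  have hmne : mu ≠ 0 := by
    intro h; rw [h, norm_zero] at hmabs; norm_num at hmabs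
  have hconj : nu = starRingEnd ℂ mu := by
    have hns : Complex.normSq mu = 1 := by
      rw [← Complex.sq_norm, hmabs]; norm_num
    have h1 : mu * starRingEnd ℂ mu = 1 := by rw [Complex.mul_conj, hns]; norm_num
    exact mul_left_cancel₀ hmne (hprod.trans h1.symm)
  have hre : 0 ≤ mu.re := by
    have h2 : t.re = 2 * mu.re := by
      rw [← hsum, hconj]; simp [Complex.add_re, Complex.conj_re]; ring
    have h3 := htr
    rw [h2] at h3
    linarith
  -- trace and determinant of 1 - c • W
  have trace1 : ∀ c : ℂ, (1 - c • W).trace = 2 - c * t := by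
    intro c
    rw [Matrix.trace_sub, Matrix.trace_smul, Matrix.trace_one, ← ht]
    simp [smul_eq_mul, Fintype.card_fin]
  have det1 : ∀ c : ℂ, (1 - c • W).det = 1 - c * t + c ^ 2 := by
    intro c
    have hd : W 0 0 * W 1 1 - W 0 1 * W 1 0 = 1 := by
      rw [← Matrix.det_fin_two]; exact hdet
    have htt : t = W 0 0 + W 1 1 := by rw [ht, Matrix.trace_fin_two]
    rw [Matrix.det_fin_two]
    simp only [Matrix.sub_apply, Matrix.smul_apply, Matrix.one_apply, smul_eq_mul]
    norm_num
    rw [htt]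
    linear_combination (c ^ 2) * hd
  have hspec : ∀ c z : ℂ, z ∈ spectrum ℂ (1 - c • W) ↔
      (z - (1 - c * mu)) * (z - (1 - c * nu)) = 0 := by
    intro c z
    rw [quad_spec, trace1, det1]
    constructor <;> intro h
    · linear_combination h + c * (z - 1) * hsum + c ^ 2 * hprod
    · linear_combination h - c * (z - 1) * hsum - c ^ 2 * hprod
  -- normality
  have hexpand : ∀ (x y : ℂ)
      (v w : EuclideanSpace ℂ (Fin 2) →L[ℂ] EuclideanSpace ℂ (Fin 2)),
      (1 - x • v) * (1 - y • w) = 1 - x • v - y • w + (x * y) • (v * w) := by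
    intro x y v w
    simp only [mul_sub, sub_mul, mul_one, one_mul, smul_mul_smul_comm]
    abel
  have hmap : ∀ c : ℂ, Φ (1 - c • W) = 1 - c • u := by
    intro c; rw [hu, hPhi, map_sub, map_one, map_smul]
  have hstar : ∀ c : ℂ, star (1 - c • u) = 1 - star c • star u := by
    intro c
    rw [← hmap c, ← map_star, star_sub, star_one, star_smul, map_sub, map_one, map_smul,
      map_star, ← hu]
  have hnormal : ∀ c : ℂ, IsStarNormal (1 - c • u) := by
    intro c
    constructor
    show star (1 - c • u) * (1 - c • u) = (1 - c • u) * star (1 - c • u)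
    rw [hstar c, hexpand, hexpand, hu1, hu2, mul_comm (star c) c]
    abel
  have hrad : ∀ c : ℂ, spectralRadius ℂ (Φ (1 - c • W)) = (‖Φ (1 - c • W)‖₊ : ENNReal) := by
    intro c
    rw [hmap c]
    letI := hnormal c
    exact IsStarNormal.spectralRadius_eq_nnnorm _
  have hspec' : ∀ c z : ℂ, z ∈ spectrum ℂ (Φ (1 - c • W)) ↔
      (z - (1 - c * mu)) * (z - (1 - c * nu)) = 0 := by
    intro c z
    rw [hPhi, AlgEquiv.spectrum_eq]
    exact hspec c z
  -- key inequality on spectral radii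
  have key : spectralRadius ℂ (Φ (1 - (1 : ℂ) • W)) ≤ spectralRadius ℂ (Φ (1 - lam • W)) := by
    refine rad_le_of_forall fun k hk => ?_
    have hk' := (hspec' 1 k).mp hk
    have hineq := scalar_ineq lam mu hlam hmabs hre
    rw [← hconj] at hineq
    have hnn : ‖1 - nu‖ = ‖1 - mu‖ := by
      rw [hconj]
      have : (1 : ℂ) - starRingEnd ℂ mu = starRingEnd ℂ (1 - mu) := by
        rw [map_sub, map_one]
      rw [this, RCLike.norm_conj]
    have hkval : ‖k‖ = ‖1 - mu‖ := by
      rcases mul_eq_zero.mp hk' with h | h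
      · rw [sub_eq_zero.mp h]; rw [one_mul]
      · rw [sub_eq_zero.mp h, one_mul]; exact hnn
    have hmem1 : (1 - lam * mu) ∈ spectrum ℂ (Φ (1 - lam • W)) :=
      (hspec' lam _).mpr (by ring)
    have hmem2 : (1 - lam * nu) ∈ spectrum ℂ (Φ (1 - lam • W)) :=
      (hspec' lam _).mpr (by ring)
    rw [← hkval] at hineq
    rcases le_max_iff.mp hineq with h | h
    · have hq : ‖k‖₊ ≤ ‖1 - lam * mu‖₊ := by
        rw [← NNReal.coe_le_coe]; simpa using h
      exact le_trans (ENNReal.coe_le_coe.mpr hq) (le_rad_of_mem hmem1)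
    · have hq : ‖k‖₊ ≤ ‖1 - lam * nu‖₊ := by
        rw [← NNReal.coe_le_coe]; simpa using h
      exact le_trans (ENNReal.coe_le_coe.mpr hq) (le_rad_of_mem hmem2)
  have key2 : (‖Φ (1 - (1 : ℂ) • W)‖₊ : ENNReal) ≤ (‖Φ (1 - lam • W)‖₊ : ENNReal) := by
    rw [← hrad 1, ← hrad lam]
    exact key
  have key3 : ‖Φ (1 - (1 : ℂ) • W)‖₊ ≤ ‖Φ (1 - lam • W)‖₊ := ENNReal.coe_le_coe.mp key2
  have key4 : ‖Φ (1 - (1 : ℂ) • W)‖ ≤ ‖Φ (1 - lam • W)‖ := key3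
  rw [one_smul] at key4
  exact key4
end

section
/- For every fixed constant b > 0 there exists a constant C > 0 such that for all real a ≥ 1, the series ∑_{x=1}^{∞} (1 − 1/(a + b·ln x))^x converges and is at most C·a. -/
set_option maxHeartbeats 1000000


/-- For every fixed b > 0 there is a constant C > 0 such that for all a ≥ 1 the series
    ∑_{x=1}^∞ (1 − 1/(a + b ln x))^x converges and its sum is at most C·a. -/
theorem summation_estimate (b : ℝ) (hb : 0 < b) :
    ∃ C : ℝ, 0 < C ∧ ∀ a : ℝ, 1 ≤ a →
      Summable (fun x : ℕ => (1 - 1 / (a + b * Real.log (x + 1))) ^ (x + 1)) ∧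
      ∑' x : ℕ, (1 - 1 / (a + b * Real.log (x + 1))) ^ (x + 1) ≤ C * a := by
  refine ⟨4 + 131072 * b ^ 4, by positivity, fun a ha => ?_⟩
  have ha0 : (0:ℝ) < a := lt_of_lt_of_le one_pos ha
  set K : ℝ := 65536 * b ^ 4 with hK
  have hK0 : 0 < K := by positivity
  set r : ℝ := Real.exp (-(1 / (2 * a))) with hr
  have hr0 : 0 < r := Real.exp_pos _
  have hr1 : r < 1 := by
    rw [hr, Real.exp_lt_one_iff]
    have : 0 < 1 / (2 * a) := by positivity
    linarith
  -- key pointwise bound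
  have key : ∀ x : ℕ, (1 - 1 / (a + b * Real.log (x + 1))) ^ (x + 1)
      ≤ r ^ (x + 1) + K / ((x : ℝ) + 1) ^ 2 := by
    intro x
    have hxnn : (0:ℝ) ≤ (x : ℝ) := Nat.cast_nonneg x
    set t : ℝ := (x : ℝ) + 1 with htdef
    have ht1 : (1:ℝ) ≤ t := by rw [htdef]; linarith
    have ht0 : (0:ℝ) < t := by linarith
    have hL0 : 0 ≤ Real.log t := Real.log_nonneg ht1
    have hbL0 : 0 ≤ b * Real.log t := mul_nonneg hb.le hL0
    have hD : 0 < a + b * Real.log t := by linarith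
    have hu1 : 1 / (a + b * Real.log t) ≤ 1 := by
      rw [div_le_one hD]; linarith
    have hbase0 : 0 ≤ 1 - 1 / (a + b * Real.log t) := by linarith
    have hbase : 1 - 1 / (a + b * Real.log t)
        ≤ Real.exp (-(1 / (a + b * Real.log t))) := by
      have := Real.add_one_le_exp (-(1 / (a + b * Real.log t)))
      linarith
    have hpow : (1 - 1 / (a + b * Real.log t)) ^ (x + 1)
        ≤ Real.exp (-(t / (a + b * Real.log t))) := by
      calc (1 - 1 / (a + b * Real.log t)) ^ (x + 1)
          ≤ (Real.exp (-(1 / (a + b * Real.log t)))) ^ (x + 1) :=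
            pow_le_pow_left₀ hbase0 hbase _
        _ = Real.exp (((x : ℝ) + 1) * -(1 / (a + b * Real.log t))) := by
            rw [← Real.exp_nat_mul]; push_cast; ring_nf
        _ = Real.exp (-(t / (a + b * Real.log t))) := by
            rw [htdef]; congr 1; ring
    rcases le_or_gt (b * Real.log t) a with hcase | hcase
    · -- denominator ≤ 2a : compare with geometric term
      have h1 : t / (2 * a) ≤ t / (a + b * Real.log t) := by
        apply div_le_div_of_nonneg_left ht0.le hD
        linarith
      have h2 : Real.exp (-(t / (a + b * Real.log t))) ≤ r ^ (x + 1) := by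
        have : (r : ℝ) ^ (x + 1) = Real.exp (((x : ℝ) + 1) * -(1 / (2 * a))) := by
          rw [hr, ← Real.exp_nat_mul]; push_cast; ring_nf
        rw [this]
        apply Real.exp_le_exp.mpr
        have : ((x : ℝ) + 1) * -(1 / (2 * a)) = -(t / (2 * a)) := by
          rw [htdef]; ring
        rw [this]
        linarith
      have h3 : 0 ≤ K / t ^ 2 := by positivity
      calc (1 - 1 / (a + b * Real.log t)) ^ (x + 1)
          ≤ Real.exp (-(t / (a + b * Real.log t))) := hpow
        _ ≤ r ^ (x + 1) := h2
        _ ≤ r ^ (x + 1) + K / t ^ 2 := by linarith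
    · -- denominator ≤ 4 b √t : compare with K/t²
      have hst0 : 0 < Real.sqrt t := Real.sqrt_pos.mpr ht0
      have hLs : Real.log t ≤ 2 * Real.sqrt t := by
        have h1 := Real.log_le_sub_one_of_pos hst0
        have h2 : Real.log (Real.sqrt t) = Real.log t / 2 := Real.log_sqrt ht0.le
        linarith
      have hD4 : a + b * Real.log t ≤ 4 * b * Real.sqrt t := by
        have : b * Real.log t ≤ b * (2 * Real.sqrt t) :=
          mul_le_mul_of_nonneg_left hLs hb.le
        linarith
      have hD4' : 0 < 4 * b * Real.sqrt t := by positivity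
      have hts : Real.sqrt t * Real.sqrt t = t := Real.mul_self_sqrt ht0.le
      set s : ℝ := Real.sqrt t / (4 * b) with hs
      have hs0 : 0 < s := by positivity
      have h1 : s ≤ t / (a + b * Real.log t) := by
        rw [le_div_iff₀ hD]
        calc s * (a + b * Real.log t) ≤ s * (4 * b * Real.sqrt t) :=
              mul_le_mul_of_nonneg_left hD4 hs0.le
          _ = t := by
            have hb' : (4 * b) ≠ 0 := by positivity
            rw [hs]; field_simp; linear_combination hts
      have h2 : Real.exp (-(t / (a + b * Real.log t))) ≤ Real.exp (-s) :=
        Real.exp_le_exp.mpr (by linarith)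
      have h4 : s ^ 4 / 256 ≤ Real.exp s := by
        have ha1 := Real.add_one_le_exp (s / 4)
        have hp : (s / 4) ^ 4 ≤ (s / 4 + 1) ^ 4 :=
          pow_le_pow_left₀ (by positivity) (by linarith) 4
        have hq : (s / 4 + 1) ^ 4 ≤ (Real.exp (s / 4)) ^ 4 :=
          pow_le_pow_left₀ (by positivity) ha1 4
        have he : (Real.exp (s / 4)) ^ 4 = Real.exp s := by
          rw [← Real.exp_nat_mul]; congr 1; push_cast; ring
        nlinarith [hp, hq]
      have h5 : Real.exp (-s) ≤ 256 / s ^ 4 := by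
        have hs4 : 0 < s ^ 4 := by positivity
        rw [le_div_iff₀ hs4]
        have hmul : Real.exp (-s) * Real.exp s = 1 := by
          rw [← Real.exp_add]; simp
        nlinarith [mul_le_mul_of_nonneg_left h4 (Real.exp_pos (-s)).le]
      have h6 : 256 / s ^ 4 = K / t ^ 2 := by
        have h4t : (Real.sqrt t) ^ 4 = t ^ 2 := by
          have h' : (Real.sqrt t) ^ 4 = (Real.sqrt t * Real.sqrt t) ^ 2 := by ring
          rw [h', hts]
        have hsp : s ^ 4 = t ^ 2 / (256 * b ^ 4) := by
          rw [hs, div_pow, h4t]; congr 1; ring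
        rw [hsp, hK]
        rw [div_div_eq_mul_div]
        have ht2 : (0:ℝ) < t ^ 2 := by positivity
        have hb4 : (0:ℝ) < 256 * b ^ 4 := by positivity
        field_simp
        ring
      have h7 : 0 ≤ r ^ (x + 1) := pow_nonneg hr0.le _
      calc (1 - 1 / (a + b * Real.log t)) ^ (x + 1)
          ≤ Real.exp (-(t / (a + b * Real.log t))) := hpow
        _ ≤ Real.exp (-s) := h2
        _ ≤ 256 / s ^ 4 := h5
        _ = K / t ^ 2 := h6
        _ ≤ r ^ (x + 1) + K / t ^ 2 := by linarith
  -- summability of the two comparison series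
  have hsum1 : Summable (fun x : ℕ => r ^ (x + 1)) := by
    simpa [pow_succ, mul_comm] using
      (summable_geometric_of_lt_one hr0.le hr1).mul_left r
  have hsumz : Summable (fun n : ℕ => (1 : ℝ) / (n : ℝ) ^ 2) := hasSum_zeta_two.summable
  have hsumz' : Summable (fun x : ℕ => (1 : ℝ) / ((x : ℝ) + 1) ^ 2) := by
    have := (summable_nat_add_iff 1).mpr hsumz
    refine this.congr fun x => ?_
    push_cast
    ring_nf
  have hsum2 : Summable (fun x : ℕ => K / ((x : ℝ) + 1) ^ 2) := by
    refine (hsumz'.mul_left K).congr fun x => ?_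
    field_simp
  have hsum : Summable (fun x : ℕ => r ^ (x + 1) + K / ((x : ℝ) + 1) ^ 2) :=
    hsum1.add hsum2
  have hnonneg : ∀ x : ℕ,
      0 ≤ (1 - 1 / (a + b * Real.log (x + 1))) ^ (x + 1) := by
    intro x
    have hxnn : (0:ℝ) ≤ (x : ℝ) := Nat.cast_nonneg x
    have ht1 : (1:ℝ) ≤ (x : ℝ) + 1 := by linarith
    have hL0 : 0 ≤ Real.log ((x : ℝ) + 1) := Real.log_nonneg ht1
    have hbL0 : 0 ≤ b * Real.log ((x : ℝ) + 1) := mul_nonneg hb.le hL0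
    have hD : 0 < a + b * Real.log ((x : ℝ) + 1) := by linarith
    have hu1 : 1 / (a + b * Real.log ((x : ℝ) + 1)) ≤ 1 := by
      rw [div_le_one hD]; linarith
    exact pow_nonneg (by linarith) _
  have hS : Summable (fun x : ℕ => (1 - 1 / (a + b * Real.log (x + 1))) ^ (x + 1)) :=
    Summable.of_nonneg_of_le hnonneg key hsum
  refine ⟨hS, ?_⟩
  -- bound the sum of the geometric part
  have hgeo : ∑' x : ℕ, r ^ (x + 1) ≤ 4 * a := by
    have h1 : ∑' x : ℕ, r ^ (x + 1) = r * (1 - r)⁻¹ := by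
      rw [← tsum_geometric_of_lt_one hr0.le hr1, ← tsum_mul_left]
      exact tsum_congr fun x => by rw [pow_succ, mul_comm]
    rw [h1]
    have hrle : r ≤ 2 * a / (2 * a + 1) := by
      have h2 := Real.add_one_le_exp (1 / (2 * a))
      have h3 : Real.exp (1 / (2 * a)) * r = 1 := by
        rw [hr, ← Real.exp_add]; simp
      have h4 : 0 < 2 * a + 1 := by linarith
      have h5 : (1 / (2 * a) + 1) * r ≤ 1 := by
        calc (1 / (2 * a) + 1) * r ≤ Real.exp (1 / (2 * a)) * r :=
              mul_le_mul_of_nonneg_right h2 hr0.le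
          _ = 1 := h3
      have hinv : 2 * a * (1 / (2 * a)) = 1 := by field_simp
      rw [le_div_iff₀ h4]
      nlinarith [mul_le_mul_of_nonneg_left h5 (by linarith : (0:ℝ) ≤ 2 * a), hinv, hr0.le]
    have h1r : 1 / (4 * a) ≤ 1 - r := by
      have e1 : (1:ℝ) / (2 * a + 1) = 1 - 2 * a / (2 * a + 1) := by
        field_simp
        ring
      have e2 : (1:ℝ) / (4 * a) ≤ 1 / (2 * a + 1) :=
        one_div_le_one_div_of_le (by linarith) (by linarith)
      linarith
    have h1r0 : 0 < 1 - r := by linarith [one_div_pos.mpr (by linarith : (0:ℝ) < 4 * a)]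
    have : (1 - r)⁻¹ ≤ 4 * a := by
      rw [inv_le_comm₀ h1r0 (by linarith)]
      calc (4 * a)⁻¹ = 1 / (4 * a) := by rw [one_div]
        _ ≤ 1 - r := h1r
    calc r * (1 - r)⁻¹ ≤ 1 * (1 - r)⁻¹ :=
          mul_le_mul_of_nonneg_right hr1.le (inv_nonneg.mpr h1r0.le)
      _ = (1 - r)⁻¹ := one_mul _
      _ ≤ 4 * a := this
  -- bound the sum of the p-series part
  have hzval : ∑' x : ℕ, (1 : ℝ) / ((x : ℝ) + 1) ^ 2 ≤ 2 := by
    have hsplit := Summable.tsum_eq_zero_add hsumz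
    rw [hasSum_zeta_two.tsum_eq] at hsplit
    have hpi : Real.pi ^ 2 / 6 ≤ 2 := by
      nlinarith [Real.pi_lt_d2, Real.pi_pos]
    push_cast at hsplit
    norm_num at hsplit
    simp only [one_div]
    linarith
  have hps : ∑' x : ℕ, K / ((x : ℝ) + 1) ^ 2 ≤ 2 * K := by
    have h1 : ∑' x : ℕ, K / ((x : ℝ) + 1) ^ 2
        = K * ∑' x : ℕ, (1 : ℝ) / ((x : ℝ) + 1) ^ 2 := by
      rw [← tsum_mul_left]
      exact tsum_congr fun x => by field_simp
    rw [h1]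
    nlinarith [hzval, hK0]
  calc ∑' x : ℕ, (1 - 1 / (a + b * Real.log (x + 1))) ^ (x + 1)
      ≤ ∑' x : ℕ, (r ^ (x + 1) + K / ((x : ℝ) + 1) ^ 2) :=
        Summable.tsum_le_tsum key hS hsum
    _ = (∑' x : ℕ, r ^ (x + 1)) + ∑' x : ℕ, K / ((x : ℝ) + 1) ^ 2 :=
        Summable.tsum_add hsum1 hsum2
    _ ≤ 4 * a + 2 * K := add_le_add hgeo hps
    _ ≤ (4 + 131072 * b ^ 4) * a := by rw [hK]; nlinarith [hK0]
end
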